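/- Let G be a finite non-bipartite symmetric directed multigraph, let φ be a circulation on G, let η ≥ 1 be an integer, let λ be an η-labeling of φ, and let A_λ ⊆ ZMod η be its intersection set. Then Bohr(A_λ + A_λ, 1/6) = {0}; that is, the only ξ ∈ ZMod η satisfying ‖s·ξ‖ ≤ 1/6 for all s ∈ A_λ + A_λ is ξ = 0. -/

import Mathlib

open Pointwise

/-- The "fractional part" norm on `ZMod η`: `min(x.val, η − x.val) / η`. -/
noncomputable def zmodNorm {η : ℕ} (x : ZMod η) : ℝ :=
  (↑(min x.val (η - x.val)) : ℝ) / (η : ℝ)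

namespace Stmt1Aux

/-- Signed representative of an element of `ZMod η` in `(-η/2, η/2]`. -/
def sgnRep (η : ℕ) (z : ZMod η) : ℤ :=
  if 2 * z.val ≤ η then (z.val : ℤ) else (z.val : ℤ) - η

lemma sgnRep_cast {η : ℕ} [NeZero η] (z : ZMod η) :
    ((sgnRep η z : ℤ) : ZMod η) = z := by
  unfold sgnRep
  split_ifs with h
  · push_cast
    simp [ZMod.natCast_val, ZMod.cast_id]
  · push_cast
    simp [ZMod.natCast_val, ZMod.cast_id, ZMod.natCast_self]

lemma sgnRep_abs {η : ℕ} [NeZero η] (z : ZMod η) :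
    |sgnRep η z| = ((min z.val (η - z.val) : ℕ) : ℤ) := by
  have hlt := ZMod.val_lt z
  unfold sgnRep
  split_ifs with h
  · rw [abs_of_nonneg (by positivity)]
    omega
  · rw [abs_of_nonpos (by omega)]
    omega

lemma int_eq_of_cast_eq {η : ℕ} [NeZero η] {k l : ℤ}
    (h : (k : ZMod η) = (l : ZMod η)) (hlt : |k - l| < (η : ℤ)) : k = l := by
  have hd : (η : ℤ) ∣ (k - l) := by
    rw [← ZMod.intCast_zmod_eq_zero_iff_dvd]
    push_cast
    rw [h]
    ring
  by_contra hne
  have h0 : 0 < |k - l| := abs_pos.mpr (sub_ne_zero.mpr hne)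
  exact absurd (Int.le_of_dvd h0 ((dvd_abs _ _).mpr hd)) (not_le.mpr hlt)

lemma two_torsion {η : ℕ} [NeZero η] {ξ z : ZMod η}
    (hξ2 : ξ + ξ = 0) (hξ : ξ ≠ 0) (hz : z + z = 0) : z = 0 ∨ z = ξ := by
  have key : ∀ w : ZMod η, w + w = 0 → w.val + w.val = 0 ∨ w.val + w.val = η := by
    intro w hw
    have h1 : ((w.val + w.val : ℕ) : ZMod η) = 0 := by
      push_cast
      simp only [ZMod.natCast_val, ZMod.cast_id]
      exact hw
    have h2 : η ∣ w.val + w.val := (ZMod.natCast_eq_zero_iff _ _).mp h1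
    have h3 := ZMod.val_lt w
    obtain ⟨t, ht⟩ := h2
    have htlt : t < 2 := by
      by_contra hcon
      push_neg at hcon
      have : η * 2 ≤ η * t := Nat.mul_le_mul_left η hcon
      omega
    interval_cases t <;> omega
  rcases key z hz with h | h
  · left
    exact (ZMod.val_eq_zero z).mp (by omega)
  · rcases key ξ hξ2 with h' | h'
    · exact absurd ((ZMod.val_eq_zero ξ).mp (by omega)) hξ
    · right
      exact ZMod.val_injective η (by omega)

end Stmt1Aux

open Stmt1Aux

/-- For a circulation on a finite non-bipartite symmetric directed
multigraph with an `η`-labeling `lam` and intersection set `A`, the Bohr set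
`Bohr(A + A, 1/6)` is exactly `{0}`. -/
theorem stmt_1 {V E : Type} [Fintype V] [Fintype E] [Nonempty V]
    (pred succ : E → V) (rev : E → E)
    (hrev : ∀ e, rev (rev e) = e)
    (hpredrev : ∀ e, pred (rev e) = succ e)
    (hsuccrev : ∀ e, succ (rev e) = pred e)
    (hrevloop : ∀ e, pred e = succ e → rev e = e)
    (hnonbip : ¬ ∃ c : V → Bool, ∀ e, c (pred e) ≠ c (succ e))
    (φ : Equiv.Perm E) (hφ : ∀ e, succ e = pred (φ e))
    (η : ℕ) (hη : 1 ≤ η)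
    (lam : E → ZMod η) (hlam : ∀ e, lam (φ e) = lam e + 1)
    (A : Set (ZMod η))
    (hA : A = {z : ZMod η | ∃ e₁ e₂, pred e₁ = pred e₂ ∧ z = lam e₁ - lam e₂}) :
    {ξ : ZMod η | ∀ s ∈ A + A, zmodNorm (s * ξ) ≤ 1 / 6} = {0} := by
  haveI : NeZero η := ⟨by omega⟩
  have hηpos : (0 : ℝ) < (η : ℝ) := by exact_mod_cast (by omega : 0 < η)
  have hηposZ : (0 : ℤ) < (η : ℤ) := by exact_mod_cast (by omega : 0 < η)
  by_cases hE : Nonempty E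
  case neg =>
    exact absurd ⟨fun _ => true, fun e => (hE ⟨e⟩).elim⟩ hnonbip
  obtain ⟨e₀⟩ := hE
  ext ξ
  simp only [Set.mem_setOf_eq, Set.mem_singleton_iff]
  constructor
  · intro hB
    by_contra hne
    -- 0 ∈ A
    have h0A : (0 : ZMod η) ∈ A := by
      rw [hA]; exact ⟨e₀, e₀, rfl, (sub_self _).symm⟩
    -- converter from zmodNorm bound to Nat bound
    have hconv : ∀ y : ZMod η, zmodNorm y ≤ 1 / 6 → 6 * min y.val (η - y.val) ≤ η := by
      intro y hy
      unfold zmodNorm at hy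
      rw [div_le_div_iff₀ hηpos (by norm_num)] at hy
      have h2 : (6 * min y.val (η - y.val) : ℝ) ≤ (η : ℝ) := by linarith
      exact_mod_cast h2
    -- every a ∈ A satisfies ‖aξ‖ ≤ 1/12
    have hA12 : ∀ a ∈ A, 12 * |sgnRep η (a * ξ)| ≤ (η : ℤ) := by
      intro a ha
      have h1 := hconv _ (hB _ (Set.add_mem_add ha h0A))
      have h2 := hconv _ (hB _ (Set.add_mem_add ha ha))
      rw [add_zero] at h1
      have hval : ((a + a) * ξ).val = ((a * ξ).val + (a * ξ).val) % η := by
        rw [add_mul]; exact ZMod.val_add _ _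
      have hlt := ZMod.val_lt (a * ξ)
      have hmod : ((a * ξ).val + (a * ξ).val < η ∧
            ((a * ξ).val + (a * ξ).val) % η = (a * ξ).val + (a * ξ).val) ∨
          (η ≤ (a * ξ).val + (a * ξ).val ∧
            ((a * ξ).val + (a * ξ).val) % η = (a * ξ).val + (a * ξ).val - η) := by
        rcases Nat.lt_or_ge ((a * ξ).val + (a * ξ).val) η with h | h
        · exact Or.inl ⟨h, Nat.mod_eq_of_lt h⟩
        · exact Or.inr ⟨h, by rw [Nat.mod_eq_sub_mod h, Nat.mod_eq_of_lt (by omega)]⟩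
      rw [hval] at h2
      rw [sgnRep_abs]
      have hgoal : 12 * min (a * ξ).val (η - (a * ξ).val) ≤ η := by
        rcases hmod with ⟨hc, hm⟩ | ⟨hc, hm⟩ <;> rw [hm] at h2 <;> omega
      exact_mod_cast hgoal
    -- base dart at each vertex
    haveI : Nonempty E := ⟨e₀⟩
    obtain ⟨b, hb⟩ : ∃ b : V → E, ∀ e, pred (b (pred e)) = pred e := by
      classical
      refine ⟨fun v => if h : ∃ f, pred f = v then h.choose else e₀, fun e => ?_⟩
      have h : ∃ f, pred f = pred e := ⟨e, rfl⟩
      simp only [dif_pos h]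
      exact h.choose_spec
    have hmemA : ∀ e : E, lam e - lam (b (pred e)) ∈ A := by
      intro e
      rw [hA]
      exact ⟨e, b (pred e), (hb e).symm, rfl⟩
    set X : E → ℤ := fun e => sgnRep η ((lam e - lam (b (pred e))) * ξ) with hXdef
    have hX12 : ∀ e, 12 * |X e| ≤ (η : ℤ) := fun e => hA12 _ (hmemA e)
    have hXcast : ∀ e, ((X e : ℤ) : ZMod η) = (lam e - lam (b (pred e))) * ξ :=
      fun e => sgnRep_cast _
    set c : E → ℤ := fun e => X e - X (φ e) with hcdef
    set s : E → ℤ := fun e => c e + c (rev e) with hsdef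
    have hccast : ∀ e, ((c e : ℤ) : ZMod η)
        = (lam (b (pred (φ e))) - lam (b (pred e)) - 1) * ξ := by
      intro e
      show ((X e - X (φ e) : ℤ) : ZMod η) = _
      push_cast
      rw [hXcast, hXcast, hlam]
      ring
    have hscast : ∀ e, ((s e : ℤ) : ZMod η) = -2 * ξ := by
      intro e
      have h1 : pred (φ (rev e)) = pred e := by rw [← hφ (rev e), hsuccrev]
      have h2 : pred (rev e) = pred (φ e) := by rw [hpredrev, hφ]
      show ((c e + c (rev e) : ℤ) : ZMod η) = _
      push_cast
      rw [hccast, hccast, h1, h2]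
      ring
    have hcbound : ∀ e, 6 * |c e| ≤ (η : ℤ) := by
      intro e
      have hb1 := hX12 e
      have hb2 := hX12 (φ e)
      have habs : |c e| ≤ |X e| + |X (φ e)| := abs_sub _ _
      linarith
    have hsbound : ∀ e, 3 * |s e| ≤ (η : ℤ) := by
      intro e
      have hb1 := hcbound e
      have hb2 := hcbound (rev e)
      have habs : |s e| ≤ |c e| + |c (rev e)| := abs_add_le _ _
      linarith
    have hsconst : ∀ e : E, s e = s e₀ := by
      intro e
      apply int_eq_of_cast_eq (η := η)
      · rw [hscast, hscast]
      · have hb1 := hsbound e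
        have hb2 := hsbound e₀
        have habs : |s e - s e₀| ≤ |s e| + |s e₀| := abs_sub _ _
        linarith
    have hsum0 : ∑ e : E, s e = 0 := by
      have hφsum : ∑ e : E, X (φ e) = ∑ e : E, X e := Equiv.sum_comp φ X
      have hcsum : ∑ e : E, c e = 0 := by
        rw [hcdef]
        rw [Finset.sum_sub_distrib, hφsum, sub_self]
      have hrevsum : ∑ e : E, c (rev e) = ∑ e : E, c e := by
        exact
          Equiv.sum_comp (Function.Involutive.toPerm rev hrev) c
      rw [hsdef]
      rw [Finset.sum_add_distrib, hrevsum, hcsum]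
      ring
    have hs0 : s e₀ = 0 := by
      have hcardsum : ∑ e : E, s e = (Fintype.card E : ℤ) * s e₀ := by
        rw [Finset.sum_congr rfl (fun e _ => hsconst e), Finset.sum_const,
          Finset.card_univ, nsmul_eq_mul]
      rw [hsum0] at hcardsum
      have hcard : 0 < Fintype.card E := Fintype.card_pos
      rcases mul_eq_zero.mp hcardsum.symm with h | h
      · exfalso
        have : (Fintype.card E : ℤ) ≠ 0 := by exact_mod_cast hcard.ne'
        exact this h
      · exact h
    have h2ξ : ξ + ξ = 0 := by
      have hcz : ((s e₀ : ℤ) : ZMod η) = -2 * ξ := hscast e₀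
      rw [hs0] at hcz
      push_cast at hcz
      linear_combination hcz
    -- every a ∈ A annihilates ξ
    have hAker : ∀ a ∈ A, a * ξ = 0 := by
      intro a ha
      have h12 := hA12 a ha
      have hzz : a * ξ + a * ξ = 0 := by
        calc a * ξ + a * ξ = a * (ξ + ξ) := by ring
          _ = 0 := by rw [h2ξ, mul_zero]
      have hcast : ((2 * sgnRep η (a * ξ) : ℤ) : ZMod η) = ((0 : ℤ) : ZMod η) := by
        push_cast
        rw [sgnRep_cast]
        linear_combination hzz
      have hzero : 2 * sgnRep η (a * ξ) = 0 := by
        apply int_eq_of_cast_eq (η := η) hcast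
        have habs : |2 * sgnRep η (a * ξ) - 0| = 2 * |sgnRep η (a * ξ)| := by
          rw [sub_zero, abs_mul]
          norm_num
        rw [habs]
        have := abs_nonneg (sgnRep η (a * ξ))
        linarith
      have hr0 : sgnRep η (a * ξ) = 0 := by omega
      calc a * ξ = ((sgnRep η (a * ξ) : ℤ) : ZMod η) := (sgnRep_cast _).symm
        _ = 0 := by rw [hr0]; norm_num
    -- build the 2-coloring
    set χ : V → ZMod η := fun v => lam (b v) * ξ with hχdef
    have hedge : ∀ e, lam e * ξ = χ (pred e) := by
      intro e
      have hk := hAker _ (hmemA e)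
      show lam e * ξ = lam (b (pred e)) * ξ
      linear_combination hk
    have hstep : ∀ e, χ (succ e) = χ (pred e) + ξ := by
      intro e
      rw [hφ e]
      calc χ (pred (φ e)) = lam (φ e) * ξ := (hedge (φ e)).symm
        _ = (lam e + 1) * ξ := by rw [hlam]
        _ = lam e * ξ + ξ := by ring
        _ = χ (pred e) + ξ := by rw [hedge e]
    have htor : ∀ v, χ v = 0 ∨ χ v = ξ := by
      intro v
      apply two_torsion h2ξ hne
      show lam (b v) * ξ + lam (b v) * ξ = 0
      calc lam (b v) * ξ + lam (b v) * ξ = lam (b v) * (ξ + ξ) := by ring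
        _ = 0 := by rw [h2ξ, mul_zero]
    have hcol : ∀ e : E, decide (χ (pred e) = 0) ≠ decide (χ (succ e) = 0) := by
      intro e
      rcases htor (pred e) with h | h
      · have h2 : χ (succ e) = ξ := by rw [hstep, h, zero_add]
        rw [h, h2]
        simp [hne]
      · have h2 : χ (succ e) = 0 := by rw [hstep, h]; exact h2ξ
        rw [h, h2]
        simp [hne]
    exact hnonbip ⟨fun v => decide (χ v = 0), hcol⟩
  · rintro rfl
    intro s hs
    have hz : zmodNorm (0 : ZMod η) = 0 := by
      simp [zmodNorm]
    rw [mul_zero, hz]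
    norm_num
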